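/- Let d ≥ 1 and define p : ℝ^d × (0,∞) → ℝ by p(x₁,...,x_d,t) = (2/π) ∫₀^∞ (∏_{j=1}^{d} exp(−x_j²/(2s))/√(2πs)) · (t/(t²+s²)) ds. Then for every (x₁,...,x_d) ≠ 0 and t > 0, p satisfies ∂²p/∂t² = −(1/4) (∑_{j=1}^{d} ∂²/∂x_j²)² p, i.e. the biharmonic operator applied to p equals −4 ∂²p/∂t². -/

import Mathlib

open Real MeasureTheory

/-- Laplacian of a function on `ℝ^d`, as the sum of second coordinatewise derivatives. -/
noncomputable def laplacian {d : ℕ} (f : (Fin d → ℝ) → ℝ) (x : Fin d → ℝ) : ℝ :=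
  ∑ j : Fin d, iteratedDeriv 2 (fun h => f (Function.update x j h)) (x j)

/-- Joint density of the vector process `(B₁(|C(t)|), ..., B_d(|C(t)|))`. -/
noncomputable def bmCauchyDensityVec (d : ℕ) (x : Fin d → ℝ) (t : ℝ) : ℝ :=
  (2 / π) * ∫ s in Set.Ioi (0 : ℝ),
    (∏ j : Fin d, Real.exp (-(x j) ^ 2 / (2 * s)) / Real.sqrt (2 * π * s)) *
      (t / (t ^ 2 + s ^ 2))

section BmCAux
open Set Filter Metric Topology


lemma exp_rpow_bound (q β : ℝ) (hq : 0 < q) (hβ : 0 ≤ β) :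
    ∃ C : ℝ, 0 < C ∧ ∀ s ∈ Ioi (0:ℝ), Real.exp (-q/(2*s)) * s ^ (-β) ≤ C := by
  set k := ⌈β⌉₊ with hk
  refine ⟨max 1 ((k.factorial : ℝ) * (2/q)^k), lt_max_of_lt_left one_pos, ?_⟩
  intro s hs
  have hs0 : (0:ℝ) < s := hs
  rcases le_total s 1 with h1 | h1
  · have hu : (0:ℝ) < q/(2*s) := by positivity
    have hpow : (q/(2*s))^k / (k.factorial : ℝ) ≤ Real.exp (q/(2*s)) := by
      calc (q/(2*s))^k / (k.factorial : ℝ)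
          ≤ ∑ i ∈ Finset.range (k+1), (q/(2*s))^i / (i.factorial : ℝ) := by
            refine Finset.single_le_sum (f := fun i => (q/(2*s))^i / (i.factorial : ℝ))
              (fun i _ => by positivity) (Finset.self_mem_range_succ k)
        _ ≤ Real.exp (q/(2*s)) := Real.sum_le_exp_of_nonneg hu.le _
    have hexp : Real.exp (-q/(2*s)) ≤ (k.factorial : ℝ) * (2*s/q)^k := by
      rw [neg_div, Real.exp_neg]
      rw [inv_le_comm₀ (Real.exp_pos _) (by positivity)]
      calc ((k.factorial : ℝ) * (2*s/q)^k)⁻¹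
          = (q/(2*s))^k / (k.factorial : ℝ) := by
            rw [mul_inv, ← inv_pow, inv_div]; ring
        _ ≤ Real.exp (q/(2*s)) := hpow
    have key : Real.exp (-q/(2*s)) * s ^ (-β)
        ≤ (k.factorial : ℝ) * (2/q)^k * (s^(k:ℝ) * s^(-β)) := by
      have h2 : ((k.factorial : ℝ) * (2*s/q)^k) * s^(-β)
          = (k.factorial : ℝ) * (2/q)^k * (s^(k:ℝ) * s^(-β)) := by
        rw [Real.rpow_natCast, div_pow, div_pow, mul_pow]; ring
      rw [← h2]
      exact mul_le_mul_of_nonneg_right hexp (Real.rpow_nonneg hs0.le _)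
    have hsk : s^(k:ℝ) * s^(-β) ≤ 1 := by
      rw [← Real.rpow_add hs0]
      apply Real.rpow_le_one hs0.le h1
      have : β ≤ (k:ℝ) := Nat.le_ceil β
      linarith
    calc Real.exp (-q/(2*s)) * s ^ (-β)
        ≤ (k.factorial : ℝ) * (2/q)^k * (s^(k:ℝ) * s^(-β)) := key
      _ ≤ (k.factorial : ℝ) * (2/q)^k * 1 :=
          mul_le_mul_of_nonneg_left hsk (by positivity)
      _ ≤ max 1 ((k.factorial : ℝ) * (2/q)^k) := by rw [mul_one]; exact le_max_right _ _
  · have he : Real.exp (-q/(2*s)) ≤ 1 := by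
      rw [Real.exp_le_one_iff, neg_div]
      simp only [neg_nonpos]
      positivity
    have hr : s ^ (-β) ≤ 1 := Real.rpow_le_one_of_one_le_of_nonpos h1 (by linarith)
    calc Real.exp (-q/(2*s)) * s ^ (-β) ≤ 1 * 1 :=
          mul_le_mul he hr (Real.rpow_nonneg hs0.le _) zero_le_one
      _ ≤ _ := by rw [mul_one]; exact le_max_left _ _

lemma integrable_master {f : ℝ → ℝ} {C : ℝ}
    (hm : AEStronglyMeasurable f (volume.restrict (Ioi 0)))
    (hb : ∀ s ∈ Ioi (0:ℝ), |f s| ≤ C * (1 + s^2)⁻¹) :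
    IntegrableOn f (Ioi (0:ℝ)) := by
  have hint : IntegrableOn (fun s : ℝ => C * (1+s^2)⁻¹) (Ioi 0) :=
    (integrable_inv_one_add_sq.const_mul C).integrableOn
  refine Integrable.mono hint hm ?_
  rw [ae_restrict_iff' measurableSet_Ioi]
  filter_upwards with s hs
  rw [Real.norm_eq_abs, Real.norm_eq_abs]
  exact (hb s hs).trans (le_abs_self _)

lemma inv_add_sq_le (a : ℝ) (ha : 0 < a) (s : ℝ) :
    (a + s^2)⁻¹ ≤ max 1 a⁻¹ * (1+s^2)⁻¹ := by
  rcases le_total 1 a with h | h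
  · calc (a+s^2)⁻¹ ≤ (1+s^2)⁻¹ := inv_anti₀ (by positivity) (by linarith)
      _ ≤ max 1 a⁻¹ * (1+s^2)⁻¹ := le_mul_of_one_le_left (by positivity) (le_max_left _ _)
  · have hinv : (1:ℝ) ≤ a⁻¹ := by nlinarith [inv_pos.2 ha, mul_inv_cancel₀ (ne_of_gt ha)]
    rw [max_eq_right hinv, ← mul_inv]
    exact inv_anti₀ (by positivity) (by nlinarith [sq_nonneg s])


noncomputable def K0 (t s : ℝ) : ℝ := t/(t^2+s^2)
noncomputable def K1 (t s : ℝ) : ℝ := (s^2-t^2)/(t^2+s^2)^2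
noncomputable def K2 (t s : ℝ) : ℝ := 2*t*(t^2-3*s^2)/(t^2+s^2)^3

noncomputable def Ew (q β : ℝ) (w : ℝ → ℝ) (s : ℝ) : ℝ :=
  Real.exp (-q/(2*s)) * s ^ (-β) * w s

lemma contOn_exp_rpow (q β : ℝ) :
    ContinuousOn (fun s : ℝ => Real.exp (-q/(2*s)) * s ^ (-β)) (Ioi 0) := by
  apply ContinuousOn.mul
  · apply Real.continuous_exp.comp_continuousOn
    exact continuousOn_const.div (continuous_const.mul continuous_id).continuousOn
      (fun s hs => by have : (0:ℝ) < s := hs; positivity)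
  · exact fun s hs => (Real.continuousAt_rpow_const s (-β)
      (Or.inl (ne_of_gt hs))).continuousWithinAt

lemma contOn_Ew (q β : ℝ) {w : ℝ → ℝ} (hw : ContinuousOn w (Ioi 0)) :
    ContinuousOn (Ew q β w) (Ioi 0) := (contOn_exp_rpow q β).mul hw

lemma contOn_K0 (t : ℝ) : ContinuousOn (K0 t) (Ioi 0) :=
  continuousOn_const.div (by fun_prop) (fun s hs => by have : (0:ℝ) < s := hs; positivity)

lemma contOn_K1 (t : ℝ) : ContinuousOn (K1 t) (Ioi 0) :=
  ContinuousOn.div (by fun_prop) (by fun_prop)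
    (fun s hs => by have : (0:ℝ) < s := hs; positivity)

lemma contOn_K2 (t : ℝ) : ContinuousOn (K2 t) (Ioi 0) :=
  ContinuousOn.div (by fun_prop) (by fun_prop)
    (fun s hs => by have : (0:ℝ) < s := hs; positivity)

lemma integrableOn_Ew (q β : ℝ) (hq : 0 < q) (hβ : 0 ≤ β) {w : ℝ → ℝ} {Cw : ℝ}
    (hw : ContinuousOn w (Ioi 0)) (hwb : ∀ s ∈ Ioi (0:ℝ), |w s| ≤ Cw * (1+s^2)⁻¹) :
    IntegrableOn (Ew q β w) (Ioi 0) := by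
  obtain ⟨C, hC, hCb⟩ := exp_rpow_bound q β hq hβ
  apply integrable_master (C := C * Cw)
  · exact (contOn_Ew q β hw).aestronglyMeasurable measurableSet_Ioi
  · intro s hs
    have hs0 : (0:ℝ) < s := hs
    have h1 : |Ew q β w s| = (Real.exp (-q/(2*s)) * s ^ (-β)) * |w s| := by
      rw [Ew, abs_mul]
      congr 1
      exact abs_of_nonneg (by positivity)
    rw [h1, mul_assoc C]
    exact mul_le_mul (hCb s hs) (hwb s hs) (abs_nonneg _)
      (le_trans (by positivity) (hCb s hs))

lemma K0_bound {t : ℝ} (ht : 0 < t) : ∀ τ ∈ ball t (t/2), ∀ s ∈ Ioi (0:ℝ),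
    |K0 τ s| ≤ (2*t * max 1 ((t/2)^2)⁻¹) * (1+s^2)⁻¹ := by
  intro τ hτ s _
  rw [mem_ball, Real.dist_eq, abs_lt] at hτ
  have h1 : t/2 < τ := by linarith [hτ.1]
  have h2 : τ < 2*t := by linarith [hτ.2]
  have hτ0 : 0 < τ := by linarith
  have : |K0 τ s| = τ/(τ^2+s^2) := by
    rw [K0, abs_of_nonneg (by positivity)]
  rw [this]
  calc τ/(τ^2+s^2) = τ * (τ^2+s^2)⁻¹ := div_eq_mul_inv _ _
    _ ≤ (2*t) * ((t/2)^2+s^2)⁻¹ := by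
        apply mul_le_mul h2.le (inv_anti₀ (by positivity) (by nlinarith)) (by positivity)
          (by linarith)
    _ ≤ (2*t) * (max 1 ((t/2)^2)⁻¹ * (1+s^2)⁻¹) :=
        mul_le_mul_of_nonneg_left (inv_add_sq_le _ (by positivity) s) (by linarith)
    _ = _ := by ring

lemma K1_bound {t : ℝ} (ht : 0 < t) : ∀ τ ∈ ball t (t/2), ∀ s ∈ Ioi (0:ℝ),
    |K1 τ s| ≤ (max 1 ((t/2)^2)⁻¹) * (1+s^2)⁻¹ := by
  intro τ hτ s _
  rw [mem_ball, Real.dist_eq, abs_lt] at hτ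
  have h1 : t/2 < τ := by linarith [hτ.1]
  have hτ0 : 0 < τ := by linarith
  have habs : |K1 τ s| ≤ (τ^2+s^2)⁻¹ := by
    rw [K1, abs_div, abs_of_nonneg (a := (τ^2+s^2)^2) (by positivity),
      div_le_iff₀ (by positivity)]
    have hend : (τ^2+s^2)⁻¹ * (τ^2+s^2)^2 = τ^2+s^2 := by
      rw [sq (τ^2+s^2), ← mul_assoc, inv_mul_cancel₀ (by positivity), one_mul]
    rw [hend, abs_le]
    constructor <;> nlinarith [sq_nonneg s, sq_nonneg τ]
  calc |K1 τ s| ≤ (τ^2+s^2)⁻¹ := habs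
    _ ≤ ((t/2)^2+s^2)⁻¹ := inv_anti₀ (by positivity) (by nlinarith)
    _ ≤ _ := inv_add_sq_le _ (by positivity) s

lemma K2_bound {t : ℝ} (ht : 0 < t) : ∀ τ ∈ ball t (t/2), ∀ s ∈ Ioi (0:ℝ),
    |K2 τ s| ≤ (12*t * ((t/2)^2)⁻¹ * max 1 ((t/2)^2)⁻¹) * (1+s^2)⁻¹ := by
  intro τ hτ s _
  rw [mem_ball, Real.dist_eq, abs_lt] at hτ
  have h1 : t/2 < τ := by linarith [hτ.1]
  have h2 : τ < 2*t := by linarith [hτ.2]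
  have hτ0 : 0 < τ := by linarith
  have hsq : ((t/2)^2+s^2)^2 ≤ (τ^2+s^2)^2 := by
    apply pow_le_pow_left₀ (by positivity) (by nlinarith) 2
  have habs : |K2 τ s| ≤ 6*τ * ((τ^2+s^2)^2)⁻¹ := by
    rw [K2, abs_div, abs_of_nonneg (a := (τ^2+s^2)^3) (by positivity),
      div_le_iff₀ (by positivity)]
    have h3 : |2*τ*(τ^2-3*s^2)| ≤ 2*τ*(3*(τ^2+s^2)) := by
      rw [abs_mul, abs_of_nonneg (by positivity : (0:ℝ) ≤ 2*τ)]
      apply mul_le_mul_of_nonneg_left _ (by positivity)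
      rw [abs_le]
      constructor <;> nlinarith [sq_nonneg s, sq_nonneg τ]
    have hend : 6*τ * ((τ^2+s^2)^2)⁻¹ * (τ^2+s^2)^3 = 6*τ*(τ^2+s^2) := by
      field_simp
    rw [hend]
    linarith
  calc |K2 τ s| ≤ 6*τ * ((τ^2+s^2)^2)⁻¹ := habs
    _ ≤ (12*t) * (((t/2)^2+s^2)^2)⁻¹ := by
        apply mul_le_mul (by linarith) (inv_anti₀ (by positivity) hsq) (by positivity)
          (by linarith)
    _ ≤ (12*t) * (((t/2)^2)⁻¹ * ((t/2)^2+s^2)⁻¹) := by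
        apply mul_le_mul_of_nonneg_left _ (by linarith)
        rw [sq (((t/2):ℝ)^2+s^2), mul_inv]
        exact mul_le_mul_of_nonneg_right (inv_anti₀ (by positivity) (by nlinarith))
          (by positivity)
    _ ≤ (12*t) * (((t/2)^2)⁻¹ * (max 1 ((t/2)^2)⁻¹ * (1+s^2)⁻¹)) := by
        apply mul_le_mul_of_nonneg_left _ (by linarith)
        exact mul_le_mul_of_nonneg_left (inv_add_sq_le _ (by positivity) s) (by positivity)
    _ = _ := by ring


noncomputable def G (q β s : ℝ) : ℝ := Real.exp (-q/(2*s)) * s ^ (-β)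

lemma Ew_eq_G_mul (q β : ℝ) (w : ℝ → ℝ) (s : ℝ) : Ew q β w s = G q β s * w s := rfl

lemma rpow_shift {s : ℝ} (hs : 0 < s) (β c : ℝ) :
    s ^ (-(β + c)) = s ^ (-β) * s ^ (-c) := by
  rw [show -(β+c) = -β + -c by ring, Real.rpow_add hs]

/-- derivative of `Ew` in `q` -/
lemma hasDerivAt_Ew_q {s : ℝ} (hs : 0 < s) (β : ℝ) (w : ℝ → ℝ) (q : ℝ) :
    HasDerivAt (fun r => Ew r β w s) (-(1/2) * Ew q (β+1) w s) q := by
  have h1 : HasDerivAt (fun r : ℝ => -r/(2*s)) (-(1/(2*s))) q := by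
    exact (((hasDerivAt_id q).neg).div_const (2*s)).congr_deriv (by ring)
  have h2 := (h1.exp).mul_const (s ^ (-β) * w s)
  have heq : (fun r => Ew r β w s) = fun r => Real.exp (-r/(2*s)) * (s ^ (-β) * w s) := by
    funext r; rw [Ew, mul_assoc]
  rw [heq]
  refine h2.congr_deriv ?_
  rw [Ew, rpow_shift hs β 1, Real.rpow_neg_one]
  field_simp

/-- derivative of `K0` in `t` -/
lemma hasDerivAt_K0_t {τ s : ℝ} (h : τ^2 + s^2 ≠ 0) :
    HasDerivAt (fun τ => K0 τ s) (K1 τ s) τ := by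
  have h1 := (hasDerivAt_id τ).div ((hasDerivAt_pow 2 τ).add_const (s^2)) h
  have heq : (fun τ => K0 τ s) = fun τ => τ / (τ^2 + s^2) := by funext τ; rw [K0]
  rw [heq]
  refine h1.congr_deriv ?_
  rw [K1]
  simp only [id_eq]
  push_cast
  ring

/-- derivative of `K1` in `t` -/
lemma hasDerivAt_K1_t {τ s : ℝ} (h : τ^2 + s^2 ≠ 0) :
    HasDerivAt (fun τ => K1 τ s) (K2 τ s) τ := by
  have hnum : HasDerivAt (fun τ : ℝ => s^2 - τ^2) (-(2*τ)) τ := by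
    simpa using (hasDerivAt_pow 2 τ).const_sub (s^2)
  have hden : HasDerivAt (fun τ : ℝ => (τ^2+s^2)^2) (2*(τ^2+s^2)*(2*τ)) τ := by
    have := ((hasDerivAt_pow 2 τ).add_const (s^2)).pow 2
    refine this.congr_deriv ?_
    push_cast
    ring
  have h1 := hnum.div hden (pow_ne_zero 2 h)
  have heq : (fun τ => K1 τ s) = fun τ => (s^2 - τ^2)/((τ^2+s^2)^2) := by funext τ; rw [K1]
  rw [heq]
  refine h1.congr_deriv ?_
  rw [K2]
  rw [div_eq_div_iff (by positivity) (by positivity)]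
  ring

lemma G_pos {q β s : ℝ} (hs : 0 < s) : 0 < G q β s := by
  rw [G]; positivity

/-- derivative of `G` in `s` -/
lemma hasDerivAt_G_s (q β : ℝ) {s : ℝ} (hs : 0 < s) :
    HasDerivAt (fun u => G q β u) (q/2 * G q (β+2) s - β * G q (β+1) s) s := by
  have h1 : HasDerivAt (fun u : ℝ => -q/(2*u)) (q/(2*s^2)) s := by
    have h := (hasDerivAt_inv (ne_of_gt hs)).const_mul (-q/2)
    have heq : (fun u : ℝ => -q/(2*u)) = fun u => -q/2 * u⁻¹ := by
      funext u
      rw [div_eq_mul_inv, div_eq_mul_inv, mul_inv]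
      ring
    rw [heq]
    refine h.congr_deriv ?_
    field_simp
  have h2 : HasDerivAt (fun u : ℝ => u ^ (-β)) (-β * s ^ (-β-1)) s :=
    Real.hasDerivAt_rpow_const (Or.inl (ne_of_gt hs))
  have h3 := (h1.exp).mul h2
  have heq : (fun u => G q β u) = fun u => Real.exp (-q/(2*u)) * u ^ (-β) := by
    funext u; rw [G]
  rw [heq]
  refine h3.congr_deriv ?_
  have e2 : s ^ (-(β+2)) = s ^ (-β) * (s^2)⁻¹ := by
    rw [rpow_shift hs β 2]
    congr 1
    rw [Real.rpow_neg hs.le, show ((2:ℝ)) = ((2:ℕ):ℝ) by norm_num, Real.rpow_natCast]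
  have e1 : s ^ (-(β+1)) = s ^ (-β) * s⁻¹ := by
    rw [rpow_shift hs β 1, Real.rpow_neg_one]
  have e3 : s ^ (-β-1) = s ^ (-β) * s⁻¹ := by
    rw [show -β-1 = -(β+1) by ring, e1]
  rw [G, G, e2, e1, e3]
  field_simp
  ring

/-- second derivative data for `G` -/
lemma hasDerivAt_G_s' (q β : ℝ) {s : ℝ} (hs : 0 < s) :
    HasDerivAt (fun u => q/2 * G q (β+2) u - β * G q (β+1) u)
      (q^2/4 * G q (β+4) s - q*(β+1) * G q (β+3) s + β*(β+1) * G q (β+2) s) s := by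
  have h1 := ((hasDerivAt_G_s q (β+2) hs).const_mul (q/2)).sub
    ((hasDerivAt_G_s q (β+1) hs).const_mul β)
  refine h1.congr_deriv ?_
  rw [show β+2+2 = β+4 by ring, show β+2+1 = β+3 by ring, show β+1+2 = β+3 by ring,
    show β+1+1 = β+2 by ring]
  ring

/-- derivative of `K0` in `s` -/
lemma hasDerivAt_K0_s (t : ℝ) {s : ℝ} (h : t^2 + s^2 ≠ 0) :
    HasDerivAt (fun u => K0 t u) (-2*t*s/(t^2+s^2)^2) s := by
  have hden : HasDerivAt (fun u : ℝ => t^2 + u^2) (2*s) s := by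
    simpa using (hasDerivAt_pow 2 s).const_add (t^2)
  have h1 := (hasDerivAt_const s t).div hden h
  have heq : (fun u => K0 t u) = fun u => t / (t^2 + u^2) := by funext u; rw [K0]
  rw [heq]
  refine h1.congr_deriv ?_
  rw [div_eq_div_iff (by positivity) (by positivity)]
  ring

/-- derivative of `h'` in `s` is `-K2` -/
lemma hasDerivAt_Hp_s (t : ℝ) {s : ℝ} (h : t^2 + s^2 ≠ 0) :
    HasDerivAt (fun u => -2*t*u/(t^2+u^2)^2) (-(K2 t s)) s := by
  have hnum : HasDerivAt (fun u : ℝ => -2*t*u) (-2*t) s := by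
    simpa using (hasDerivAt_id s).const_mul (-2*t)
  have hden : HasDerivAt (fun u : ℝ => (t^2+u^2)^2) (2*(t^2+s^2)*(2*s)) s := by
    have hin : HasDerivAt (fun u : ℝ => t^2 + u^2) (2*s) s := by
      simpa using (hasDerivAt_pow 2 s).const_add (t^2)
    have := hin.pow 2
    refine this.congr_deriv ?_
    push_cast
    ring
  have h1 := hnum.div hden (pow_ne_zero 2 h)
  refine h1.congr_deriv ?_
  rw [K2, ← neg_div]
  rw [div_eq_div_iff (by positivity) (by positivity)]
  ring

noncomputable def J (β q t : ℝ) : ℝ := ∫ s in Ioi (0:ℝ), Ew q β (K0 t) s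
noncomputable def JA (β q t : ℝ) : ℝ := ∫ s in Ioi (0:ℝ), Ew q β (K1 t) s
noncomputable def JB (β q t : ℝ) : ℝ := ∫ s in Ioi (0:ℝ), Ew q β (K2 t) s

lemma integrableOn_J {β q t : ℝ} (hq : 0 < q) (hβ : 0 ≤ β) (ht : 0 < t) :
    IntegrableOn (Ew q β (K0 t)) (Ioi 0) :=
  integrableOn_Ew q β hq hβ (contOn_K0 t)
    (fun s hs => K0_bound ht t (mem_ball_self (by positivity)) s hs)

lemma integrableOn_JA {β q t : ℝ} (hq : 0 < q) (hβ : 0 ≤ β) (ht : 0 < t) :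
    IntegrableOn (Ew q β (K1 t)) (Ioi 0) :=
  integrableOn_Ew q β hq hβ (contOn_K1 t)
    (fun s hs => K1_bound ht t (mem_ball_self (by positivity)) s hs)

lemma integrableOn_JB {β q t : ℝ} (hq : 0 < q) (hβ : 0 ≤ β) (ht : 0 < t) :
    IntegrableOn (Ew q β (K2 t)) (Ioi 0) :=
  integrableOn_Ew q β hq hβ (contOn_K2 t)
    (fun s hs => K2_bound ht t (mem_ball_self (by positivity)) s hs)

lemma contOn_one_add_sq_inv (c : ℝ) :
    ContinuousOn (fun u : ℝ => c * (1+u^2)⁻¹) (Ioi 0) :=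
  (continuous_const.mul ((continuous_const.add (continuous_pow 2)).inv₀
    (fun x => (by positivity : (0:ℝ) < 1 + x^2).ne'))).continuousOn

lemma hasDerivAt_J_q (β t : ℝ) (hβ : 0 ≤ β) (ht : 0 < t) {q : ℝ} (hq : 0 < q) :
    HasDerivAt (fun r => J β r t) (-(1/2) * J (β+1) q t) q := by
  set CK0 : ℝ := 2*t * max 1 ((t/2)^2)⁻¹ with hCK0
  have hCK0pos : 0 < CK0 := by
    apply mul_pos (by linarith)
    exact lt_max_of_lt_left one_pos
  have key := hasDerivAt_integral_of_dominated_loc_of_deriv_le (s := ball q (q/2))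
    (μ := volume.restrict (Ioi 0)) (x₀ := q)
    (F := fun r s => Ew r β (K0 t) s)
    (F' := fun r s => -(1/2) * Ew r (β+1) (K0 t) s)
    (bound := fun s => (1/2) * Ew (q/2) (β+1) (fun u => CK0 * (1+u^2)⁻¹) s)
    (ball_mem_nhds _ (by positivity))
    (Eventually.of_forall fun r =>
      (contOn_Ew r β (contOn_K0 t)).aestronglyMeasurable measurableSet_Ioi)
    (integrableOn_J hq hβ ht)
    (((contOn_Ew q (β+1) (contOn_K0 t)).aestronglyMeasurable measurableSet_Ioi).const_mul _)
    ?_ ?_ ?_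
  · have : (∫ s in Ioi (0:ℝ), -(1/2) * Ew q (β+1) (K0 t) s) = -(1/2) * J (β+1) q t := by
      rw [J, integral_const_mul]
    rw [← this]
    exact key.2
  · rw [ae_restrict_iff' measurableSet_Ioi]
    filter_upwards with s hs
    intro r hr
    have hs0 : (0:ℝ) < s := hs
    rw [mem_ball, Real.dist_eq, abs_lt] at hr
    have hr1 : q/2 < r := by linarith [hr.1]
    rw [Real.norm_eq_abs, abs_mul, Ew_eq_G_mul, abs_mul, Ew_eq_G_mul,
      abs_of_nonneg (G_pos hs0).le]
    have h1 : G r (β+1) s ≤ G (q/2) (β+1) s := by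
      rw [G, G]
      apply mul_le_mul_of_nonneg_right _ (Real.rpow_nonneg hs0.le _)
      apply Real.exp_le_exp.2
      rw [div_le_div_iff_of_pos_right (by positivity)]
      linarith
    have h2 : |K0 t s| ≤ CK0 * (1+s^2)⁻¹ := K0_bound ht t (mem_ball_self (by positivity)) s hs
    calc |(-(1/2) : ℝ)| * (G r (β+1) s * |K0 t s|)
        ≤ (1/2) * (G (q/2) (β+1) s * (CK0 * (1+s^2)⁻¹)) := by
          rw [abs_of_nonpos (by norm_num : (-(1/2):ℝ) ≤ 0)]
          norm_num
          exact mul_le_mul h1 h2 (abs_nonneg _) (G_pos hs0).le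
      _ = (1/2) * Ew (q/2) (β+1) (fun u => CK0 * (1+u^2)⁻¹) s := by rw [Ew_eq_G_mul]
  · apply Integrable.const_mul
    exact integrableOn_Ew (q/2) (β+1) (by positivity) (by linarith) (contOn_one_add_sq_inv CK0)
      (fun s hs => by rw [abs_of_nonneg (by positivity)])
  · rw [ae_restrict_iff' measurableSet_Ioi]
    filter_upwards with s hs
    intro r _
    exact hasDerivAt_Ew_q hs β (K0 t) r

lemma hasDerivAt_J_t (β q : ℝ) (hβ : 0 ≤ β) (hq : 0 < q) {t : ℝ} (ht : 0 < t) :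
    HasDerivAt (fun τ => J β q τ) (JA β q t) t := by
  set CK1 : ℝ := max 1 ((t/2)^2)⁻¹ with hCK1
  have key := hasDerivAt_integral_of_dominated_loc_of_deriv_le (s := ball t (t/2))
    (μ := volume.restrict (Ioi 0)) (x₀ := t)
    (F := fun τ s => Ew q β (K0 τ) s)
    (F' := fun τ s => Ew q β (K1 τ) s)
    (bound := fun s => Ew q β (fun u => CK1 * (1+u^2)⁻¹) s)
    (ball_mem_nhds _ (by positivity))
    (Eventually.of_forall fun τ =>
      (contOn_Ew q β (contOn_K0 τ)).aestronglyMeasurable measurableSet_Ioi)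
    (integrableOn_J hq hβ ht)
    ((contOn_Ew q β (contOn_K1 t)).aestronglyMeasurable measurableSet_Ioi)
    ?_ ?_ ?_
  · exact key.2
  · rw [ae_restrict_iff' measurableSet_Ioi]
    filter_upwards with s hs
    intro τ hτ
    have hs0 : (0:ℝ) < s := hs
    rw [Real.norm_eq_abs, Ew_eq_G_mul, abs_mul, abs_of_nonneg (G_pos hs0).le, Ew_eq_G_mul]
    exact mul_le_mul_of_nonneg_left (K1_bound ht τ hτ s hs) (G_pos hs0).le
  · exact integrableOn_Ew q β hq hβ (contOn_one_add_sq_inv _)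
      (fun s hs => by rw [abs_of_nonneg (by positivity)])
  · rw [ae_restrict_iff' measurableSet_Ioi]
    filter_upwards with s hs
    intro τ _
    have hs0 : (0:ℝ) < s := hs
    have hne : τ^2 + s^2 ≠ 0 := by positivity
    simpa [Ew_eq_G_mul, mul_comm] using (hasDerivAt_K0_t hne).const_mul (G q β s)

lemma hasDerivAt_JA_t (β q : ℝ) (hβ : 0 ≤ β) (hq : 0 < q) {t : ℝ} (ht : 0 < t) :
    HasDerivAt (fun τ => JA β q τ) (JB β q t) t := by
  set CK2 : ℝ := 12*t * ((t/2)^2)⁻¹ * max 1 ((t/2)^2)⁻¹ with hCK2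
  have key := hasDerivAt_integral_of_dominated_loc_of_deriv_le (s := ball t (t/2))
    (μ := volume.restrict (Ioi 0)) (x₀ := t)
    (F := fun τ s => Ew q β (K1 τ) s)
    (F' := fun τ s => Ew q β (K2 τ) s)
    (bound := fun s => Ew q β (fun u => CK2 * (1+u^2)⁻¹) s)
    (ball_mem_nhds _ (by positivity))
    (Eventually.of_forall fun τ =>
      (contOn_Ew q β (contOn_K1 τ)).aestronglyMeasurable measurableSet_Ioi)
    (integrableOn_JA hq hβ ht)
    ((contOn_Ew q β (contOn_K2 t)).aestronglyMeasurable measurableSet_Ioi)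
    ?_ ?_ ?_
  · exact key.2
  · rw [ae_restrict_iff' measurableSet_Ioi]
    filter_upwards with s hs
    intro τ hτ
    have hs0 : (0:ℝ) < s := hs
    rw [Real.norm_eq_abs, Ew_eq_G_mul, abs_mul, abs_of_nonneg (G_pos hs0).le, Ew_eq_G_mul]
    exact mul_le_mul_of_nonneg_left (K2_bound ht τ hτ s hs) (G_pos hs0).le
  · exact integrableOn_Ew q β hq hβ (contOn_one_add_sq_inv _)
      (fun s hs => by rw [abs_of_nonneg (by positivity)])
  · rw [ae_restrict_iff' measurableSet_Ioi]
    filter_upwards with s hs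
    intro τ _
    have hs0 : (0:ℝ) < s := hs
    have hne : τ^2 + s^2 ≠ 0 := by positivity
    simpa [Ew_eq_G_mul, mul_comm] using (hasDerivAt_K1_t hne).const_mul (G q β s)

lemma tendsto_G_zero_right (q β : ℝ) (hq : 0 < q) (hβ : 0 ≤ β) :
    Tendsto (G q β) (𝓝[>] (0:ℝ)) (𝓝 0) := by
  obtain ⟨C, hC, hCb⟩ := exp_rpow_bound q (β+1) hq (by linarith)
  refine squeeze_zero' (g := fun s => C * s) ?_ ?_ ?_
  · filter_upwards [self_mem_nhdsWithin] with s hs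
    exact (G_pos hs).le
  · filter_upwards [self_mem_nhdsWithin] with s hs
    have hs0 : (0:ℝ) < s := hs
    have hrw : G q β s = (Real.exp (-q/(2*s)) * s ^ (-(β+1))) * s := by
      rw [G, rpow_shift hs0 β 1, Real.rpow_neg_one, mul_assoc, mul_assoc,
        inv_mul_cancel₀ (ne_of_gt hs0), mul_one]
    rw [hrw]
    exact mul_le_mul_of_nonneg_right (hCb s hs) hs0.le
  · have : Tendsto (fun s : ℝ => C * s) (𝓝[>] (0:ℝ)) (𝓝 (C*0)) :=
      ((continuous_const.mul continuous_id).tendsto 0).mono_left nhdsWithin_le_nhds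
    simpa using this

lemma tendsto_G_zero_top (q β : ℝ) (hβ : 0 < β) : Tendsto (G q β) atTop (𝓝 0) := by
  have h2 : Tendsto (fun s : ℝ => -q/(2*s)) atTop (𝓝 0) := by
    have heq : (fun s : ℝ => -q/(2*s)) = fun s => -q/2 * s⁻¹ := by
      funext u; rw [div_eq_mul_inv, div_eq_mul_inv, mul_inv]; ring
    rw [heq]
    simpa using tendsto_inv_atTop_zero.const_mul (-q/2)
  have h1 : Tendsto (fun s : ℝ => Real.exp (-q/(2*s))) atTop (𝓝 1) := by
    have := (Real.continuous_exp.tendsto 0).comp h2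
    rw [Real.exp_zero] at this
    exact this
  have h3 : Tendsto (fun s : ℝ => s ^ (-β)) atTop (𝓝 0) := tendsto_rpow_neg_atTop hβ
  have := h1.mul h3
  rw [one_mul] at this
  exact this

lemma tendsto_K0_top (t : ℝ) : Tendsto (fun s => K0 t s) atTop (𝓝 0) := by
  have hden : Tendsto (fun s : ℝ => t^2 + s^2) atTop atTop :=
    tendsto_atTop_add_const_left _ _ (tendsto_pow_atTop (by norm_num))
  have := hden.inv_tendsto_atTop.const_mul t
  simp only [mul_zero] at this
  apply this.congr
  intro s
  simp only [Pi.inv_apply]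
  rw [K0, div_eq_mul_inv]

lemma tendsto_Hp_top (t : ℝ) (ht : 0 < t) :
    Tendsto (fun s : ℝ => -2*t*s/(t^2+s^2)^2) atTop (𝓝 0) := by
  refine squeeze_zero_norm' (a := fun s : ℝ => 2*t*((s^3)⁻¹)) ?_ ?_
  · filter_upwards [eventually_ge_atTop (1:ℝ)] with s hs
    have hs0 : (0:ℝ) < s := lt_of_lt_of_le one_pos hs
    rw [Real.norm_eq_abs, abs_div, abs_of_nonpos (by nlinarith : -2*t*s ≤ 0),
      abs_of_nonneg (by positivity : (0:ℝ) ≤ (t^2+s^2)^2),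
      show -(-2*t*s) = 2*t*s by ring]
    have h4 : s^4 ≤ (t^2+s^2)^2 := by nlinarith [sq_nonneg t, sq_nonneg s, sq_nonneg (t*s)]
    calc 2*t*s/(t^2+s^2)^2
        ≤ 2*t*s/(s^4) := by
          apply div_le_div_of_nonneg_left (by positivity) (by positivity) h4
      _ = 2*t*((s^3)⁻¹) := by field_simp
  · have h5 : Tendsto (fun s : ℝ => s^3) atTop atTop := tendsto_pow_atTop (by norm_num)
    have h6 := h5.inv_tendsto_atTop.const_mul (2*t)
    simp only [Pi.inv_apply, mul_zero] at h6
    exact h6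

lemma integral_Ioi_deriv_zero (Φ Φ' : ℝ → ℝ)
    (hd : ∀ s ∈ Ioi (0:ℝ), HasDerivAt Φ (Φ' s) s)
    (hi : IntegrableOn Φ' (Ioi 0))
    (h0 : Tendsto Φ (𝓝[>] (0:ℝ)) (𝓝 0))
    (htop : Tendsto Φ atTop (𝓝 0)) : ∫ s in Ioi (0:ℝ), Φ' s = 0 := by
  have ha : ∀ n : ℕ, ∫ s in Ioi ((1:ℝ)/(n+1)), Φ' s = 0 - Φ (1/(n+1)) := by
    intro n
    exact integral_Ioi_of_hasDerivAt_of_tendsto'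
      (fun x hx => hd x (lt_of_lt_of_le (by positivity : (0:ℝ) < 1/(n+1)) hx))
      (hi.mono_set (Ioi_subset_Ioi (by positivity))) htop
  have hmono : Monotone (fun n : ℕ => Ioi ((1:ℝ)/(n+1))) := by
    intro m n hmn
    apply Ioi_subset_Ioi
    apply one_div_le_one_div_of_le (by positivity)
    exact_mod_cast Nat.succ_le_succ hmn
  have hunion : (⋃ n : ℕ, Ioi ((1:ℝ)/(n+1))) = Ioi (0:ℝ) := by
    ext x
    simp only [mem_iUnion, mem_Ioi]
    constructor
    · rintro ⟨n, hn⟩; exact lt_trans (by positivity) hn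
    · intro hx
      obtain ⟨n, hn⟩ := exists_nat_gt (1/x)
      refine ⟨n, ?_⟩
      rw [div_lt_iff₀ (by positivity)]
      have h1 : 1/x < (n:ℝ)+1 := hn.trans (by linarith)
      have := (div_lt_iff₀ hx).1 h1
      linarith [this]
  have hlim1 : Tendsto (fun n : ℕ => ∫ s in Ioi ((1:ℝ)/(n+1)), Φ' s) atTop
      (𝓝 (∫ s in Ioi (0:ℝ), Φ' s)) := by
    have := tendsto_setIntegral_of_monotone (fun n : ℕ => measurableSet_Ioi) hmono
      (by rw [hunion]; exact hi)
    rwa [hunion] at this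
  have hseq : Tendsto (fun n : ℕ => (1/(n+1) : ℝ)) atTop (𝓝[>] (0:ℝ)) := by
    apply tendsto_nhdsWithin_of_tendsto_nhds_of_eventually_within
    · exact tendsto_one_div_add_atTop_nhds_zero_nat
    · exact Eventually.of_forall fun n => mem_Ioi.2 (by positivity)
  have hlim2 : Tendsto (fun n : ℕ => (0:ℝ) - Φ (1/(n+1))) atTop (𝓝 0) := by
    have := h0.comp hseq
    have h2 := this.const_sub (0:ℝ)
    simpa using h2
  exact tendsto_nhds_unique hlim1 (hlim2.congr (fun n => (ha n).symm))

lemma ibp (β q t : ℝ) (hβ : 0 < β) (hq : 0 < q) (ht : 0 < t) :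
    q^2/4 * J (β+4) q t - q*(β+1) * J (β+3) q t + β*(β+1) * J (β+2) q t = - JB β q t := by
  set Φ : ℝ → ℝ := fun s => (q/2 * G q (β+2) s - β * G q (β+1) s) * K0 t s
      - G q β s * (-2*t*s/(t^2+s^2)^2) with hΦ
  set Φ' : ℝ → ℝ := fun s =>
      (q^2/4 * G q (β+4) s - q*(β+1) * G q (β+3) s + β*(β+1) * G q (β+2) s) * K0 t s
      + G q β s * K2 t s with hΦ'
  have hd : ∀ s ∈ Ioi (0:ℝ), HasDerivAt Φ (Φ' s) s := by
    intro s hs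
    have hs0 : (0:ℝ) < s := hs
    have hne : t^2 + s^2 ≠ 0 := by positivity
    have h1 := (hasDerivAt_G_s' q β hs0).mul (hasDerivAt_K0_s t hne)
    have h2 := (hasDerivAt_G_s q β hs0).mul (hasDerivAt_Hp_s t hne)
    have h3 := h1.sub h2
    refine h3.congr_deriv ?_
    simp only [hΦ']
    ring
  have hiJ4 : IntegrableOn (Ew q (β+4) (K0 t)) (Ioi 0) := integrableOn_J hq (by linarith) ht
  have hiJ3 : IntegrableOn (Ew q (β+3) (K0 t)) (Ioi 0) := integrableOn_J hq (by linarith) ht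
  have hiJ2 : IntegrableOn (Ew q (β+2) (K0 t)) (Ioi 0) := integrableOn_J hq (by linarith) ht
  have hiB : IntegrableOn (Ew q β (K2 t)) (Ioi 0) := integrableOn_JB hq hβ.le ht
  have hcomb : IntegrableOn (fun s => q^2/4 * Ew q (β+4) (K0 t) s
      - q*(β+1) * Ew q (β+3) (K0 t) s + β*(β+1) * Ew q (β+2) (K0 t) s
      + Ew q β (K2 t) s) (Ioi 0) :=
    (((hiJ4.const_mul _).sub (hiJ3.const_mul _)).add (hiJ2.const_mul _)).add hiB
  have heqon : EqOn Φ' (fun s => q^2/4 * Ew q (β+4) (K0 t) s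
      - q*(β+1) * Ew q (β+3) (K0 t) s + β*(β+1) * Ew q (β+2) (K0 t) s
      + Ew q β (K2 t) s) (Ioi 0) := by
    intro s hs
    simp only [hΦ', Ew_eq_G_mul]
    ring
  have hi : IntegrableOn Φ' (Ioi 0) := hcomb.congr_fun (fun s hs => (heqon hs).symm) measurableSet_Ioi
  have hK0cont : ContinuousAt (fun s : ℝ => K0 t s) 0 := by
    have hne : t^2 + (0:ℝ)^2 ≠ 0 := by positivity
    simp only [K0]
    exact ContinuousAt.div continuousAt_const (by fun_prop) hne
  have hHpcont : ContinuousAt (fun s : ℝ => -2*t*s/(t^2+s^2)^2) 0 := by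
    have hne : ((t^2 + (0:ℝ)^2)^2) ≠ 0 := by positivity
    exact ContinuousAt.div (by fun_prop) (by fun_prop) hne
  have h0 : Tendsto Φ (𝓝[>] (0:ℝ)) (𝓝 0) := by
    have hA : Tendsto (fun s => q/2 * G q (β+2) s - β * G q (β+1) s) (𝓝[>] (0:ℝ)) (𝓝 0) := by
      have := ((tendsto_G_zero_right q (β+2) hq (by linarith)).const_mul (q/2)).sub
        ((tendsto_G_zero_right q (β+1) hq (by linarith)).const_mul β)
      simpa using this
    have hB : Tendsto (fun s => K0 t s) (𝓝[>] (0:ℝ)) (𝓝 (K0 t 0)) :=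
      hK0cont.tendsto.mono_left nhdsWithin_le_nhds
    have hC : Tendsto (G q β) (𝓝[>] (0:ℝ)) (𝓝 0) := tendsto_G_zero_right q β hq hβ.le
    have hD : Tendsto (fun s : ℝ => -2*t*s/(t^2+s^2)^2) (𝓝[>] (0:ℝ))
        (𝓝 (-2*t*0/(t^2+0^2)^2)) := hHpcont.tendsto.mono_left nhdsWithin_le_nhds
    have hcomb := (hA.mul hB).sub (hC.mul hD)
    rw [hΦ]
    simpa only [zero_mul, sub_zero] using hcomb
  have htop : Tendsto Φ atTop (𝓝 0) := by
    have hA : Tendsto (fun s => q/2 * G q (β+2) s - β * G q (β+1) s) atTop (𝓝 0) := by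
      have := ((tendsto_G_zero_top q (β+2) (by linarith)).const_mul (q/2)).sub
        ((tendsto_G_zero_top q (β+1) (by linarith)).const_mul β)
      simpa using this
    have hcomb := (hA.mul (tendsto_K0_top t)).sub
      ((tendsto_G_zero_top q β hβ).mul (tendsto_Hp_top t ht))
    rw [hΦ]
    simpa only [zero_mul, sub_zero] using hcomb
  have hzero := integral_Ioi_deriv_zero Φ Φ' hd hi h0 htop
  rw [MeasureTheory.setIntegral_congr_fun measurableSet_Ioi heqon] at hzero
  have hA : IntegrableOn (fun s => q^2/4 * Ew q (β+4) (K0 t) s) (Ioi 0) := by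
    exact hiJ4.const_mul _
  have hB : IntegrableOn (fun s => q*(β+1) * Ew q (β+3) (K0 t) s) (Ioi 0) := by
    exact hiJ3.const_mul _
  have hC : IntegrableOn (fun s => β*(β+1) * Ew q (β+2) (K0 t) s) (Ioi 0) := by
    exact hiJ2.const_mul _
  have hAB : IntegrableOn (fun s => q^2/4 * Ew q (β+4) (K0 t) s
      - q*(β+1) * Ew q (β+3) (K0 t) s) (Ioi 0) := by exact hA.sub hB
  have hABC : IntegrableOn (fun s => q^2/4 * Ew q (β+4) (K0 t) s
      - q*(β+1) * Ew q (β+3) (K0 t) s + β*(β+1) * Ew q (β+2) (K0 t) s) (Ioi 0) := by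
    exact hAB.add hC
  rw [MeasureTheory.integral_add hABC hiB, MeasureTheory.integral_add hAB hC,
    MeasureTheory.integral_sub hA hB,
    integral_const_mul, integral_const_mul, integral_const_mul] at hzero
  have hJdef4 : (∫ s in Ioi (0:ℝ), Ew q (β+4) (K0 t) s) = J (β+4) q t := rfl
  have hJdef3 : (∫ s in Ioi (0:ℝ), Ew q (β+3) (K0 t) s) = J (β+3) q t := rfl
  have hJdef2 : (∫ s in Ioi (0:ℝ), Ew q (β+2) (K0 t) s) = J (β+2) q t := rfl
  have hJB : (∫ s in Ioi (0:ℝ), Ew q β (K2 t) s) = JB β q t := rfl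
  rw [hJdef4, hJdef3, hJdef2, hJB] at hzero
  linarith

lemma iteratedDeriv_two_of {f g₁ : ℝ → ℝ} {g₂x : ℝ} {U : Set ℝ} (hU : IsOpen U) {x : ℝ}
    (hx : x ∈ U) (h1 : ∀ y ∈ U, HasDerivAt f (g₁ y) y) (h2 : HasDerivAt g₁ g₂x x) :
    iteratedDeriv 2 f x = g₂x := by
  have hev : deriv f =ᶠ[𝓝 x] g₁ := by
    filter_upwards [hU.mem_nhds hx] with y hy
    exact (h1 y hy).deriv
  rw [iteratedDeriv_succ, iteratedDeriv_one, hev.deriv_eq]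
  exact h2.deriv

lemma iteratedDeriv_two_congr {f g : ℝ → ℝ} {U : Set ℝ} (hU : IsOpen U) {x : ℝ} (hx : x ∈ U)
    (h : ∀ y ∈ U, f y = g y) : iteratedDeriv 2 f x = iteratedDeriv 2 g x := by
  have hd : ∀ y ∈ U, deriv f y = deriv g y := fun y hy =>
    Filter.EventuallyEq.deriv_eq (by filter_upwards [hU.mem_nhds hy] with z hz using h z hz)
  rw [iteratedDeriv_succ, iteratedDeriv_one, iteratedDeriv_succ, iteratedDeriv_one]
  exact Filter.EventuallyEq.deriv_eq (by filter_upwards [hU.mem_nhds hx] with z hz using hd z hz)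

lemma continuous_update' {d : ℕ} (x : Fin d → ℝ) (j : Fin d) :
    Continuous (fun h : ℝ => Function.update x j h) := by
  apply continuous_pi
  intro i
  by_cases hij : i = j
  · subst hij
    simp only [Function.update_self]
    exact continuous_id
  · simp only [Function.update_of_ne hij]
    exact continuous_const

lemma laplacian_congr {d : ℕ} {f g : (Fin d → ℝ) → ℝ} {U : Set (Fin d → ℝ)} (hU : IsOpen U)
    {x : Fin d → ℝ} (hx : x ∈ U) (h : ∀ y ∈ U, f y = g y) :
    laplacian f x = laplacian g x := by
  rw [laplacian, laplacian]
  refine Finset.sum_congr rfl fun j _ => ?_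
  have hUj : IsOpen {h : ℝ | Function.update x j h ∈ U} :=
    hU.preimage (continuous_update' x j)
  have hxj : x j ∈ {h : ℝ | Function.update x j h ∈ U} := by
    simp only [mem_setOf_eq, Function.update_eq_self]
    exact hx
  exact iteratedDeriv_two_congr hUj hxj (fun y hy => h _ hy)

lemma sum_update_sq {d : ℕ} (x : Fin d → ℝ) (j : Fin d) (h : ℝ) :
    ∑ i, (Function.update x j h i)^2 = (∑ i, (x i)^2) - (x j)^2 + h^2 := by
  have he : (fun i => (Function.update x j h i)^2)
      = Function.update (fun i => (x i)^2) j (h^2) := by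
    funext i
    by_cases hij : i = j
    · subst hij; simp
    · simp [Function.update_of_ne hij]
  rw [he, Finset.sum_update_of_mem (Finset.mem_univ j)]
  have h2 : ∑ i, (x i)^2 = ∑ i ∈ Finset.univ \ {j}, (x i)^2 + (x j)^2 :=
    Finset.sum_eq_sum_sdiff_singleton_add (Finset.mem_univ j) _
  linarith

lemma laplacian_radial {d : ℕ} (φ φ' φ'' : ℝ → ℝ)
    (h1 : ∀ q, 0 < q → HasDerivAt φ (φ' q) q) (h2 : ∀ q, 0 < q → HasDerivAt φ' (φ'' q) q)
    (x : Fin d → ℝ) (hx : 0 < ∑ j, (x j)^2) :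
    laplacian (fun z => φ (∑ j, (z j)^2)) x
      = 2*d*(φ' (∑ j, (x j)^2)) + 4*(∑ j, (x j)^2)*(φ'' (∑ j, (x j)^2)) := by
  set q := ∑ j, (x j)^2 with hqdef
  have hterm : ∀ j : Fin d,
      iteratedDeriv 2 (fun h => φ (∑ i, (Function.update x j h i)^2)) (x j)
        = 2*(φ' q) + 4*(x j)^2*(φ'' q) := by
    intro j
    set c := q - (x j)^2 with hcdef
    have hq2 : c + (x j)^2 = q := by rw [hcdef]; ring
    have hc : ∀ h : ℝ, ∑ i, (Function.update x j h i)^2 = c + h^2 := by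
      intro h; rw [sum_update_sq, hcdef, hqdef]
    have hfun : (fun h : ℝ => φ (∑ i, (Function.update x j h i)^2))
        = fun h => φ (c + h^2) := by
      funext h; rw [hc h]
    have hUopen : IsOpen {h : ℝ | 0 < c + h^2} :=
      isOpen_lt continuous_const (by fun_prop)
    have hxj : x j ∈ {h : ℝ | 0 < c + h^2} := by
      simp only [mem_setOf_eq, hq2]; exact hx
    have h1' : ∀ y ∈ {h : ℝ | 0 < c + h^2},
        HasDerivAt (fun h : ℝ => φ (c + h^2)) (φ' (c + y^2) * (2*y)) y := by
      intro y hy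
      have hin : HasDerivAt (fun h : ℝ => c + h^2) (2*y) y := by
        simpa using (hasDerivAt_pow 2 y).const_add c
      exact (h1 _ hy).comp y hin
    have h2' : HasDerivAt (fun y : ℝ => φ' (c + y^2) * (2*y))
        ((φ'' q * (2*(x j))) * (2*(x j)) + φ' (c + (x j)^2) * 2) (x j) := by
      have hin : HasDerivAt (fun h : ℝ => c + h^2) (2*(x j)) (x j) := by
        simpa using (hasDerivAt_pow 2 (x j)).const_add c
      have hg : HasDerivAt φ' (φ'' q) (c + (x j)^2) := by
        rw [hq2]; exact h2 q hx
      have ha : HasDerivAt (fun y : ℝ => φ' (c + y^2)) (φ'' q * (2*(x j))) (x j) :=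
        hg.comp (x j) hin
      have hb : HasDerivAt (fun y : ℝ => 2*y) 2 (x j) := by
        simpa using (hasDerivAt_id (x j)).const_mul 2
      exact ha.mul hb
    calc iteratedDeriv 2 (fun h : ℝ => φ (∑ i, (Function.update x j h i)^2)) (x j)
        = (φ'' q * (2*(x j))) * (2*(x j)) + φ' (c + (x j)^2) * 2 := by
          rw [hfun]
          exact iteratedDeriv_two_of hUopen hxj h1' h2'
      _ = 2*(φ' q) + 4*(x j)^2*(φ'' q) := by rw [hq2]; ring
  rw [laplacian]
  rw [Finset.sum_congr rfl (fun j _ => hterm j)]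
  rw [Finset.sum_add_distrib, Finset.sum_const, Finset.card_univ, Fintype.card_fin]
  have hs : ∑ j : Fin d, 4*(x j)^2*(φ'' q) = (∑ j, (x j)^2) * (4*(φ'' q)) := by
    rw [← Finset.sum_mul,
      show (∑ i : Fin d, 4*(x i)^2) = 4 * ∑ i, (x i)^2 from (Finset.mul_sum _ _ _).symm]
    ring
  rw [hs, ← hqdef]
  simp only [nsmul_eq_mul]
  ring

lemma p_eq (d : ℕ) (x : Fin d → ℝ) (t : ℝ) :
    bmCauchyDensityVec d x t
      = ((2/π) * (2*π) ^ (-((d:ℝ)/2))) * J ((d:ℝ)/2) (∑ j, (x j)^2) t := by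
  rw [bmCauchyDensityVec, J]
  have hcongr : EqOn
      (fun s => (∏ j : Fin d, Real.exp (-(x j) ^ 2 / (2 * s)) / Real.sqrt (2 * π * s)) *
        (t / (t ^ 2 + s ^ 2)))
      (fun s => (2*π) ^ (-((d:ℝ)/2)) * Ew (∑ j, (x j)^2) ((d:ℝ)/2) (K0 t) s) (Ioi 0) := by
    intro s hs
    have hs0 : (0:ℝ) < s := hs
    simp only
    rw [Finset.prod_div_distrib, ← Real.exp_sum, Finset.prod_const, Finset.card_univ,
      Fintype.card_fin]
    have hsum : ∑ j, (-(x j)^2/(2*s)) = -(∑ j, (x j)^2)/(2*s) := by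
      rw [← Finset.sum_div, ← Finset.sum_neg_distrib]
    have hsqrt : (Real.sqrt (2*π*s))^d = (2*π*s) ^ ((d:ℝ)/2) := by
      rw [Real.sqrt_eq_rpow, ← Real.rpow_natCast ((2*π*s) ^ ((1:ℝ)/2)) d,
        ← Real.rpow_mul (by positivity)]
      congr 1
      ring
    have hpow : ((2*π*s:ℝ) ^ ((d:ℝ)/2))⁻¹ = (2*π) ^ (-((d:ℝ)/2)) * s ^ (-((d:ℝ)/2)) := by
      rw [← Real.rpow_neg (by positivity), show (2*π*s:ℝ) = (2*π)*s by ring,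
        Real.mul_rpow (by positivity) hs0.le]
    rw [hsum, hsqrt, div_eq_mul_inv, hpow, Ew, K0]
    ring
  rw [MeasureTheory.setIntegral_congr_fun measurableSet_Ioi hcongr, integral_const_mul]
  ring


end BmCAux

/-- Away from the origin, the joint density of `(B₁(|C(t)|), ..., B_d(|C(t)|))` satisfies
`∂²p/∂t² = −(1/4)(∑_j ∂²/∂x_j²)² p`, i.e. the biharmonic operator applied to `p`
equals `−4 ∂²p/∂t²`. -/
theorem bmCauchyDensityVec_pde (d : ℕ) (hd : 1 ≤ d) :
    ∀ (x : Fin d → ℝ) (t : ℝ), x ≠ 0 → 0 < t →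
      iteratedDeriv 2 (fun τ => bmCauchyDensityVec d x τ) t
          = -(1 / 4) * laplacian (fun y => laplacian (fun z => bmCauchyDensityVec d z t) y) x
        ∧ laplacian (fun y => laplacian (fun z => bmCauchyDensityVec d z t) y) x
          = -4 * iteratedDeriv 2 (fun τ => bmCauchyDensityVec d x τ) t := by
  intro x t hx ht
  set γ : ℝ := (d:ℝ)/2 with hγ
  have hdR : (1:ℝ) ≤ (d:ℝ) := by exact_mod_cast hd
  have hγpos : 0 < γ := by rw [hγ]; linarith
  set q := ∑ j, (x j)^2 with hq
  have hqpos : 0 < q := by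
    obtain ⟨j, hj⟩ : ∃ j, x j ≠ 0 := by
      by_contra h
      push_neg at h
      exact hx (funext h)
    have h1 : 0 < (x j)^2 := by positivity
    exact lt_of_lt_of_le h1 (Finset.single_le_sum (fun i _ => sq_nonneg (x i))
      (Finset.mem_univ j))
  set c₀ : ℝ := (2/π) * (2*π) ^ (-((d:ℝ)/2)) with hc₀
  set φ1 : ℝ → ℝ := fun r => -(c₀/2) * J (γ+1) r t with hφ1
  set φ2 : ℝ → ℝ := fun r => (c₀/4) * J (γ+2) r t with hφ2
  set φ3 : ℝ → ℝ := fun r => -(c₀/8) * J (γ+3) r t with hφ3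
  set φ4 : ℝ → ℝ := fun r => (c₀/16) * J (γ+4) r t with hφ4
  have hd0 : ∀ r, 0 < r → HasDerivAt (fun u => c₀ * J γ u t) (φ1 r) r := by
    intro r hr
    have h := (hasDerivAt_J_q γ t hγpos.le ht hr).const_mul c₀
    refine h.congr_deriv ?_
    simp only [hφ1]
    ring
  have hd1 : ∀ r, 0 < r → HasDerivAt φ1 (φ2 r) r := by
    intro r hr
    have h := (hasDerivAt_J_q (γ+1) t (by linarith) ht hr).const_mul (-(c₀/2))
    refine h.congr_deriv ?_
    simp only [hφ2, show γ+1+1 = γ+2 by ring]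
    ring
  have hd2 : ∀ r, 0 < r → HasDerivAt φ2 (φ3 r) r := by
    intro r hr
    have h := (hasDerivAt_J_q (γ+2) t (by linarith) ht hr).const_mul (c₀/4)
    refine h.congr_deriv ?_
    simp only [hφ3, show γ+2+1 = γ+3 by ring]
    ring
  have hd3 : ∀ r, 0 < r → HasDerivAt φ3 (φ4 r) r := by
    intro r hr
    have h := (hasDerivAt_J_q (γ+3) t (by linarith) ht hr).const_mul (-(c₀/8))
    refine h.congr_deriv ?_
    simp only [hφ4, show γ+3+1 = γ+4 by ring]
    ring
  set ψ : ℝ → ℝ := fun r => 2*(d:ℝ)*(φ1 r) + 4*r*(φ2 r) with hψ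
  set ψ' : ℝ → ℝ := fun r => 2*(d:ℝ)*(φ2 r) + (4*(φ2 r) + 4*r*(φ3 r)) with hψ'
  set ψ'' : ℝ → ℝ := fun r => 2*(d:ℝ)*(φ3 r) + (8*(φ3 r) + 4*r*(φ4 r)) with hψ''
  have hdψ : ∀ r, 0 < r → HasDerivAt ψ (ψ' r) r := by
    intro r hr
    have h1 := (hd1 r hr).const_mul (2*(d:ℝ))
    have h2 := ((hasDerivAt_id r).const_mul 4).mul (hd2 r hr)
    have h3 := h1.add h2
    have heq : (fun u : ℝ => 2*(d:ℝ)*(φ1 u) + 4*u*(φ2 u))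
        = fun u : ℝ => 2*(d:ℝ)*(φ1 u) + (4*u)*(φ2 u) := by
      funext u; ring
    rw [hψ, heq]
    refine h3.congr_deriv ?_
    simp only [hψ', id_eq]
    ring
  have hdψ' : ∀ r, 0 < r → HasDerivAt ψ' (ψ'' r) r := by
    intro r hr
    have h1 := (hd2 r hr).const_mul (2*(d:ℝ))
    have h2 := (hd2 r hr).const_mul 4
    have h3 := ((hasDerivAt_id r).const_mul 4).mul (hd3 r hr)
    have h4 := h1.add (h2.add h3)
    have heq : (fun u : ℝ => 2*(d:ℝ)*(φ2 u) + (4*(φ2 u) + 4*u*(φ3 u)))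
        = fun u : ℝ => 2*(d:ℝ)*(φ2 u) + (4*(φ2 u) + (4*u)*(φ3 u)) := by
      funext u; ring
    rw [hψ', heq]
    refine h4.congr_deriv ?_
    simp only [hψ'', id_eq]
    ring
  have hinner : ∀ y : Fin d → ℝ, 0 < ∑ j, (y j)^2 →
      laplacian (fun z => bmCauchyDensityVec d z t) y = ψ (∑ j, (y j)^2) := by
    intro y hy
    have hfun : (fun z : Fin d → ℝ => bmCauchyDensityVec d z t)
        = fun z => c₀ * J γ (∑ j, (z j)^2) t := by
      funext z
      rw [p_eq d z t]
    rw [hfun, laplacian_radial (fun r => c₀ * J γ r t) φ1 φ2 hd0 hd1 y hy, hψ]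
  have hU : IsOpen {y : Fin d → ℝ | 0 < ∑ j, (y j)^2} :=
    isOpen_lt continuous_const (continuous_finset_sum _ fun j _ => (continuous_apply j).pow 2)
  have hxU : x ∈ {y : Fin d → ℝ | 0 < ∑ j, (y j)^2} := hqpos
  have houter : laplacian (fun y => laplacian (fun z => bmCauchyDensityVec d z t) y) x
      = 2*(d:ℝ)*(ψ' q) + 4*q*(ψ'' q) := by
    rw [laplacian_congr hU hxU (fun y hy => hinner y hy)]
    exact laplacian_radial ψ ψ' ψ'' hdψ hdψ' x hqpos
  have hTd : iteratedDeriv 2 (fun τ => bmCauchyDensityVec d x τ) t = c₀ * JB γ q t := by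
    have hfun : (fun τ => bmCauchyDensityVec d x τ) = fun τ => c₀ * J γ q τ := by
      funext τ
      rw [p_eq d x τ]
    rw [hfun]
    exact iteratedDeriv_two_of (U := Set.Ioi (0:ℝ)) (g₁ := fun τ => c₀ * JA γ q τ)
      isOpen_Ioi (Set.mem_Ioi.2 ht)
      (fun y hy => (hasDerivAt_J_t γ q hγpos.le hqpos (Set.mem_Ioi.1 hy)).const_mul c₀)
      ((hasDerivAt_JA_t γ q hγpos.le hqpos ht).const_mul c₀)
  have houterJ : 2*(d:ℝ)*(ψ' q) + 4*q*(ψ'' q)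
      = c₀ * (4*γ*(γ+1) * J (γ+2) q t - 4*(γ+1)*q * J (γ+3) q t + q^2 * J (γ+4) q t) := by
    simp only [hψ', hψ'', hφ2, hφ3, hφ4, hγ]
    ring
  have hibp := ibp γ q t hγpos hqpos ht
  have hcombo : 4*γ*(γ+1) * J (γ+2) q t - 4*(γ+1)*q * J (γ+3) q t + q^2 * J (γ+4) q t
      = -4 * JB γ q t := by
    linear_combination 4 * hibp
  constructor
  · rw [hTd, houter, houterJ, hcombo]
    ring
  · rw [hTd, houter, houterJ, hcombo]
    ring
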